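/- Let N, K be positive natural numbers and let W be a complex matrix indexed by (Fin K × Fin N) × (Fin K × Fin N). Then W commutes with the Kronecker product I_K ⊗ U for every unitary matrix U ∈ ℂ^{N×N} (i.e., (I_K ⊗ U) * W = W * (I_K ⊗ U) for all U with UᴴU = I_N) if and only if there exists a matrix G ∈ ℂ^{K×K} such that W = G ⊗ I_N, where (G ⊗ I_N)_{(k,n),(k',n')} = G_{k,k'} if n = n' and 0 otherwise. -/

import Mathlib

open Matrix Kronecker

/-- A matrix `W` indexed by `(Fin K × Fin N) × (Fin K × Fin N)` commutes with `I_K ⊗ U`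
for every unitary `U` iff `W = G ⊗ I_N` for some `G`. -/
theorem commutes_with_all_IK_kron_unitary_iff_kron_identity
    (N K : ℕ) (hN : 0 < N) (hK : 0 < K)
    (W : Matrix (Fin K × Fin N) (Fin K × Fin N) ℂ) :
    (∀ U : Matrix (Fin N) (Fin N) ℂ, Uᴴ * U = 1 →
      ((1 : Matrix (Fin K) (Fin K) ℂ) ⊗ₖ U) * W = W * ((1 : Matrix (Fin K) (Fin K) ℂ) ⊗ₖ U))
    ↔ ∃ G : Matrix (Fin K) (Fin K) ℂ, W = G ⊗ₖ (1 : Matrix (Fin N) (Fin N) ℂ) := by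
  constructor
  · intro h
    -- Step 1: off-diagonal (in the N index) entries vanish, via diagonal sign unitaries.
    have hoff : ∀ (k k' : Fin K) (n n' : Fin N), n ≠ n' → W (k, n) (k', n') = 0 := by
      intro k k' n n' hnn
      set d : Fin N → ℂ := fun m => if m = n then -1 else 1 with hd
      have hUd : (Matrix.diagonal d)ᴴ * Matrix.diagonal d = 1 := by
        rw [Matrix.diagonal_conjTranspose, Matrix.diagonal_mul_diagonal]
        ext i j
        rcases eq_or_ne i j with rfl | hij
        · by_cases hi : i = n <;> simp [hd, hi, Matrix.diagonal_apply_eq, Matrix.one_apply]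
        · simp [Matrix.diagonal_apply_ne _ hij, Matrix.one_apply_ne hij]
      have hkron : (1 : Matrix (Fin K) (Fin K) ℂ) ⊗ₖ Matrix.diagonal d
          = Matrix.diagonal (fun p : Fin K × Fin N => d p.2) := by
        rw [← Matrix.diagonal_one, Matrix.diagonal_kronecker_diagonal]
        simp
      have h2 := h (Matrix.diagonal d) hUd
      rw [hkron] at h2
      have h3 := congrFun (congrFun h2 (k, n)) (k', n')
      rw [Matrix.diagonal_mul, Matrix.mul_diagonal] at h3
      simp only [hd, if_pos rfl, if_neg (Ne.symm hnn)] at h3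
      -- h3 : -1 * W (k,n) (k',n') = W (k,n) (k',n') * 1
      have : (2 : ℂ) * W (k, n) (k', n') = 0 := by ring_nf; linear_combination -h3
      simpa using this
    -- Step 2: diagonal entries are independent of the N index, via swap unitaries.
    have hdiag : ∀ (k k' : Fin K) (n n' : Fin N), W (k, n) (k', n) = W (k, n') (k', n') := by
      intro k k' n n'
      by_cases hnn : n = n'
      · rw [hnn]
      set σ := Equiv.swap n n' with hσ
      set U : Matrix (Fin N) (Fin N) ℂ := σ.toPEquiv.toMatrix with hU
      have hUconj : Uᴴ = σ.symm.toPEquiv.toMatrix := by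
        rw [Equiv.toPEquiv_symm, PEquiv.toMatrix_symm]
        ext i j
        rw [Matrix.conjTranspose_apply, Matrix.transpose_apply, hU,
          PEquiv.toMatrix_toPEquiv_eq]
        by_cases hij : σ i = j <;> simp [Matrix.one_apply, hij]
      have hUunit : Uᴴ * U = 1 := by
        rw [hUconj, hU, ← PEquiv.toMatrix_trans, ← Equiv.toPEquiv_trans,
          Equiv.symm_trans_self, Equiv.toPEquiv_refl, PEquiv.toMatrix_refl]
      set τ : Fin K × Fin N ≃ Fin K × Fin N := (Equiv.refl (Fin K)).prodCongr σ with hτ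
      have hkron : (1 : Matrix (Fin K) (Fin K) ℂ) ⊗ₖ U = τ.toPEquiv.toMatrix := by
        ext ⟨a, b⟩ ⟨a', b'⟩
        rw [Matrix.kroneckerMap_apply, PEquiv.toMatrix_toPEquiv_eq]
        simp only [hτ, Equiv.prodCongr_apply, Equiv.coe_refl, Prod.map, id]
        by_cases h1 : a = a' <;> by_cases h2 : σ b = b' <;>
          simp [hτ, hU, PEquiv.toMatrix_toPEquiv_eq, Equiv.prodCongr_apply, Equiv.coe_refl,
            Prod.map, Matrix.one_apply, h1, h2, Prod.ext_iff, Equiv.toPEquiv_apply]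
      have h2 := h U hUunit
      rw [hkron, PEquiv.toMatrix_toPEquiv_mul, PEquiv.mul_toMatrix_toPEquiv] at h2
      have h3 := congrFun (congrFun h2 (k, n)) (k', n')
      simp only [Matrix.submatrix_apply, id, hτ, Equiv.prodCongr_apply, Equiv.coe_refl,
        Prod.map, Equiv.prodCongr_symm, Equiv.refl_symm, hσ, Equiv.symm_swap,
        Equiv.swap_apply_left, Equiv.swap_apply_right] at h3
      exact h3.symm
    refine ⟨fun k k' => W (k, ⟨0, hN⟩) (k', ⟨0, hN⟩), ?_⟩
    ext ⟨k, n⟩ ⟨k', n'⟩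
    by_cases hnn : n = n'
    · subst hnn
      change W (k, n) (k', n) = W (k, ⟨0, hN⟩) (k', ⟨0, hN⟩) * (1 : Matrix (Fin N) (Fin N) ℂ) n n
      simp [Matrix.one_apply, hdiag k k' n ⟨0, hN⟩]
    · change W (k, n) (k', n') = W (k, ⟨0, hN⟩) (k', ⟨0, hN⟩) * (1 : Matrix (Fin N) (Fin N) ℂ) n n'
      simp [Matrix.one_apply, hnn, hoff k k' n n' hnn]
  · rintro ⟨G, rfl⟩ U hU
    rw [← Matrix.mul_kronecker_mul, ← Matrix.mul_kronecker_mul, Matrix.one_mul,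
      Matrix.mul_one, Matrix.one_mul, Matrix.mul_one]
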